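/- arXiv:2111.02291 — 6 statements merged into one kernel-verified Lean document; each statement's English description precedes it below -/
import Mathlib

section
/- Let G be a symmetric positive semidefinite matrix, A a real matrix of compatible size, and c a vector. Then A · (I − G Aᵀ (A G Aᵀ)⁺ A) G c = 0, i.e., the vector (I − G Aᵀ (A G Aᵀ)⁺ A) G c lies in the kernel of A. -/
open Matrix

/-- For symmetric PSD `G`, matrix `A` and vector `c`,
`A ((I − G Aᵀ (A G Aᵀ)⁺ A) G c) = 0`, where `B` is the Moore–Penrose
pseudoinverse of `A G Aᵀ`. -/
theorem stmt1 {n m : ℕ}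
    (G : Matrix (Fin n) (Fin n) ℝ) (hG : G.PosSemidef)
    (A : Matrix (Fin m) (Fin n) ℝ) (c : Fin n → ℝ)
    (B : Matrix (Fin m) (Fin m) ℝ)
    (hB1 : (A * G * Aᵀ) * B * (A * G * Aᵀ) = A * G * Aᵀ)
    (hB2 : B * (A * G * Aᵀ) * B = B)
    (hB3 : ((A * G * Aᵀ) * B)ᵀ = (A * G * Aᵀ) * B)
    (hB4 : (B * (A * G * Aᵀ))ᵀ = B * (A * G * Aᵀ)) :
    A.mulVec ((1 - G * Aᵀ * B * A).mulVec (G.mulVec c)) = 0 := by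
  set M : Matrix (Fin m) (Fin m) ℝ := A * G * Aᵀ with hM
  open scoped MatrixOrder in set S : Matrix (Fin n) (Fin n) ℝ := CFC.sqrt G with hSdef
  have hSS : S * S = G := by open scoped MatrixOrder in exact CFC.sqrt_mul_sqrt_self G hG.nonneg
  have hSsym : Sᵀ = S := by
    have : S.IsHermitian := by open scoped MatrixOrder in exact (CFC.sqrt_nonneg G).posSemidef.1
    rwa [Matrix.IsHermitian, Matrix.conjTranspose_eq_transpose_of_trivial] at this
  have hGsym : Gᵀ = G := by
    have := hG.1
    rwa [Matrix.IsHermitian, Matrix.conjTranspose_eq_transpose_of_trivial] at this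
  have hMsym : Mᵀ = M := by
    rw [hM, Matrix.transpose_mul, Matrix.transpose_mul, Matrix.transpose_transpose,
      hGsym, Matrix.mul_assoc]
  set X : Matrix (Fin m) (Fin n) ℝ := A * S with hX
  have hXXt : X * Xᵀ = M := by
    rw [hX, Matrix.transpose_mul, hSsym, hM, ← hSS]
    simp only [Matrix.mul_assoc]
  have hBtM : Bᵀ * M = M * B := by
    have := hB3
    rwa [Matrix.transpose_mul, hMsym] at this
  have hNt : (X - M * B * X)ᵀ = Xᵀ - Xᵀ * (Bᵀ * M) := by
    rw [Matrix.transpose_sub, Matrix.transpose_mul (M * B) X, Matrix.transpose_mul M B, hMsym]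
  have e1 : X * (Xᵀ * (Bᵀ * M)) = M * (M * B) := by
    rw [← Matrix.mul_assoc, hXXt, hBtM]
  have e2 : (M * B * X) * Xᵀ = M := by
    rw [Matrix.mul_assoc (M * B) X Xᵀ, hXXt, hB1]
  have e3 : (M * B * X) * (Xᵀ * (Bᵀ * M)) = M * (M * B) := by
    rw [← Matrix.mul_assoc, Matrix.mul_assoc (M * B) X Xᵀ, hXXt, hB1, hBtM]
  have hN : (X - M * B * X) * (X - M * B * X)ᵀ = 0 := by
    rw [hNt, Matrix.sub_mul, Matrix.mul_sub, Matrix.mul_sub, hXXt, e1, e2, e3]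
    abel
  have hX0 : X = M * B * X := by
    have h0 : X - M * B * X = 0 := by
      apply Matrix.self_mul_conjTranspose_eq_zero.mp
      rwa [Matrix.conjTranspose_eq_transpose_of_trivial]
    exact (sub_eq_zero.mp h0)
  have hAG : M * B * (A * G) = A * G := by
    have h1 : X * S = M * B * X * S := by rw [← hX0]
    rw [hX, Matrix.mul_assoc A S S, hSS] at h1
    rw [Matrix.mul_assoc (M * B) (A * S) S, Matrix.mul_assoc A S S, hSS] at h1
    exact h1.symm
  have hkey : A * ((1 - G * Aᵀ * B * A) * G) = 0 := by
    rw [Matrix.sub_mul, Matrix.one_mul, Matrix.mul_sub]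
    have : A * (G * Aᵀ * B * A * G) = M * B * (A * G) := by
      rw [hM]; simp only [Matrix.mul_assoc]
    rw [this, hAG, sub_self]
  calc A.mulVec ((1 - G * Aᵀ * B * A).mulVec (G.mulVec c))
      = (A * ((1 - G * Aᵀ * B * A) * G)).mulVec c := by
        rw [Matrix.mulVec_mulVec, Matrix.mulVec_mulVec, Matrix.mul_assoc]
    _ = 0 := by rw [hkey, Matrix.zero_mulVec]
end

section
/- Let G be a symmetric positive semidefinite matrix, A a matrix, and c a vector. Then cᵀ G c ≥ cᵀ G Aᵀ (A G Aᵀ)⁺ A G c, i.e., the derivative quantity −cᵀGc + cᵀ G Aᵀ (A G Aᵀ)⁺ A G c is nonpositive. -/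
open Matrix
open scoped MatrixOrder

private lemma dot_aux {n m : ℕ} (M N : Matrix (Fin n) (Fin m) ℝ) (v w : Fin m → ℝ) :
    (M *ᵥ v) ⬝ᵥ (N *ᵥ w) = v ⬝ᵥ (Mᵀ * N) *ᵥ w := by
  rw [← mulVec_mulVec, ← transpose_transpose M, mulVec_transpose, ← dotProduct_mulVec]
  simp

/-- For symmetric PSD `G`, matrix `A` and vector `c`,
`cᵀ G c ≥ cᵀ G Aᵀ (A G Aᵀ)⁺ A G c`. -/
theorem stmt2 {n m : ℕ}
    (G : Matrix (Fin n) (Fin n) ℝ) (hG : G.PosSemidef)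
    (A : Matrix (Fin m) (Fin n) ℝ) (c : Fin n → ℝ)
    (B : Matrix (Fin m) (Fin m) ℝ)
    (hB1 : (A * G * Aᵀ) * B * (A * G * Aᵀ) = A * G * Aᵀ)
    (hB2 : B * (A * G * Aᵀ) * B = B)
    (hB3 : ((A * G * Aᵀ) * B)ᵀ = (A * G * Aᵀ) * B)
    (hB4 : (B * (A * G * Aᵀ))ᵀ = B * (A * G * Aᵀ)) :
    c ⬝ᵥ (G * Aᵀ * B * A * G).mulVec c ≤ c ⬝ᵥ G.mulVec c := by
  have hGT : Gᵀ = G := hG.isHermitian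
  -- square root of G
  set S : Matrix (Fin n) (Fin n) ℝ := CFC.sqrt G with hSdef
  have hSS : S * S = G := CFC.sqrt_mul_sqrt_self G hG.nonneg
  have hST : Sᵀ = S := (CFC.sqrt_nonneg G).posSemidef.isHermitian
  clear_value S
  set M : Matrix (Fin m) (Fin m) ℝ := A * G * Aᵀ with hMdef
  clear_value M
  have hMT : Mᵀ = M := by
    rw [hMdef]
    simp [transpose_mul, hGT, Matrix.mul_assoc]
  -- transposed Penrose axioms
  have h1 : M * Bᵀ * M = M := by
    have := congrArg transpose hB1
    simp only [transpose_mul, hMT] at this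
    rwa [← mul_assoc] at this
  have h2 : Bᵀ * M * Bᵀ = Bᵀ := by
    have := congrArg transpose hB2
    simp only [transpose_mul, hMT] at this
    rwa [← mul_assoc] at this
  have h3 : Bᵀ * M = M * B := by
    have := hB3
    rwa [transpose_mul, hMT] at this
  have h4 : M * Bᵀ = B * M := by
    have := hB4
    rwa [transpose_mul, hMT] at this
  -- B is symmetric
  have e1 : M * B = B * M := by
    calc M * B = (M * Bᵀ * M) * B := by rw [h1]
    _ = (M * Bᵀ) * (M * B) := by rw [mul_assoc]
    _ = (M * Bᵀ) * (Bᵀ * M) := by rw [h3]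
    _ = (B * M) * (Bᵀ * M) := by rw [h4]
    _ = B * (M * Bᵀ * M) := by rw [mul_assoc, ← mul_assoc M]
    _ = B * M := by rw [h1]
  have hBT : Bᵀ = B := by
    calc Bᵀ = Bᵀ * M * Bᵀ := h2.symm
    _ = Bᵀ * (M * Bᵀ) := by rw [mul_assoc]
    _ = Bᵀ * (B * M) := by rw [h4]
    _ = Bᵀ * (M * B) := by rw [← e1]
    _ = (Bᵀ * M) * B := by rw [mul_assoc]
    _ = (M * B) * B := by rw [h3]
    _ = (B * M) * B := by rw [e1]
    _ = B := hB2
  set P : Matrix (Fin n) (Fin n) ℝ := S * Aᵀ * B * A * S with hPdef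
  have hPT : Pᵀ = P := by
    rw [hPdef]
    simp only [transpose_mul, transpose_transpose, hST, hBT]
    simp only [Matrix.mul_assoc]
  have hPP : P * P = P := by
    have step : P * P = S * Aᵀ * (B * M * B) * A * S := by
      rw [hPdef, hMdef, ← hSS]
      simp only [Matrix.mul_assoc]
    rw [step, hB2]
  set x : Fin n → ℝ := S *ᵥ c with hxdef
  have key1 : c ⬝ᵥ (G * Aᵀ * B * A * G).mulVec c = x ⬝ᵥ P *ᵥ x := by
    have step : x ⬝ᵥ P *ᵥ x = c ⬝ᵥ (Sᵀ * (P * S)) *ᵥ c := by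
      rw [hxdef, mulVec_mulVec, dot_aux]
    have eqm : G * Aᵀ * B * A * G = Sᵀ * (P * S) := by
      rw [hST, hPdef, ← hSS]
      simp only [Matrix.mul_assoc]
    rw [step, eqm]
  have key2 : c ⬝ᵥ G.mulVec c = x ⬝ᵥ x := by
    rw [hxdef, dot_aux, hST, hSS]
  rw [key1, key2]
  have hq : (0:ℝ) ≤ (x - P *ᵥ x) ⬝ᵥ (x - P *ᵥ x) :=
    Finset.sum_nonneg fun _ _ => mul_self_nonneg _
  have expand : (x - P *ᵥ x) ⬝ᵥ (x - P *ᵥ x) = x ⬝ᵥ x - x ⬝ᵥ P *ᵥ x := by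
    have hPx : (P *ᵥ x) ⬝ᵥ (P *ᵥ x) = x ⬝ᵥ P *ᵥ x := by
      rw [dot_aux, hPT, hPP]
    have hxP : (P *ᵥ x) ⬝ᵥ x = x ⬝ᵥ P *ᵥ x := dotProduct_comm _ _
    rw [sub_dotProduct, dotProduct_sub, dotProduct_sub, hPx, hxP]
    ring
  linarith [expand ▸ hq]
end

section
/- Let G be symmetric positive semidefinite, A a matrix, c a vector, and define v := −(I − G Aᵀ (A G Aᵀ)⁺ A) G c. If cᵀ G c = cᵀ G Aᵀ (A G Aᵀ)⁺ A G c, then v = 0. -/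
open Matrix

lemma key_cancel {n m : ℕ} (M : Matrix (Fin m) (Fin n) ℝ) (B : Matrix (Fin m) (Fin m) ℝ)
    (h : (M * Mᵀ) * B * (M * Mᵀ) = M * Mᵀ) : (M * Mᵀ) * B * M = M := by
  have hX : (M * Mᵀ * B - 1) * (M * Mᵀ) = 0 := by
    rw [Matrix.sub_mul, Matrix.one_mul, h, sub_self]
  have hY : ((M * Mᵀ * B - 1) * M) * ((M * Mᵀ * B - 1) * M)ᵀ = 0 := by
    calc ((M * Mᵀ * B - 1) * M) * ((M * Mᵀ * B - 1) * M)ᵀ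
        = ((M * Mᵀ * B - 1) * (M * Mᵀ)) * (M * Mᵀ * B - 1)ᵀ := by
          rw [Matrix.transpose_mul]; simp only [Matrix.mul_assoc]
      _ = 0 := by rw [hX, Matrix.zero_mul]
  have hZ : (M * Mᵀ * B - 1) * M = 0 :=
    (Matrix.self_mul_conjTranspose_eq_zero (A := (M * Mᵀ * B - 1) * M)).mp (by
      simpa [Matrix.conjTranspose_eq_transpose_of_trivial] using hY)
  have h2 : M * Mᵀ * B * M - M = 0 := by
    rw [← hZ, Matrix.sub_mul, Matrix.one_mul]
  have := sub_eq_zero.mp h2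
  simpa using this

lemma aux_main {n m : ℕ} (M : Matrix (Fin m) (Fin n) ℝ) (B : Matrix (Fin m) (Fin m) ℝ)
    (hB1 : (M * Mᵀ) * B * (M * Mᵀ) = M * Mᵀ) (u : Fin n → ℝ)
    (heq : u ⬝ᵥ u = u ⬝ᵥ (Mᵀ * B * M) *ᵥ u) :
    (1 - Mᵀ * B * M) *ᵥ u = 0 := by
  have hkey : M * Mᵀ * B * M = M := key_cancel M B hB1
  have hkey' : M * (Mᵀ * (B * M)) = M := by
    simpa only [Matrix.mul_assoc] using hkey
  have h4 : Mᵀ * (Bᵀ * M) * (Mᵀ * B * M) = Mᵀ * (Bᵀ * M) := by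
    simp only [Matrix.mul_assoc, hkey']
  have hRR : (1 - Mᵀ * B * M)ᵀ * (1 - Mᵀ * B * M) = 1 - Mᵀ * B * M := by
    rw [Matrix.transpose_sub, Matrix.transpose_one, Matrix.transpose_mul, Matrix.transpose_mul,
      Matrix.transpose_transpose]
    have expand : (1 - Mᵀ * (Bᵀ * M)) * (1 - Mᵀ * B * M)
        = 1 - Mᵀ * B * M - Mᵀ * (Bᵀ * M) + Mᵀ * (Bᵀ * M) * (Mᵀ * B * M) := by
      noncomm_ring
    rw [expand, h4]; abel
  have hRu0 : u ⬝ᵥ (1 - Mᵀ * B * M) *ᵥ u = 0 := by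
    rw [Matrix.sub_mulVec, dotProduct_sub, Matrix.one_mulVec, heq, sub_self]
  have hsq : ((1 - Mᵀ * B * M) *ᵥ u) ⬝ᵥ ((1 - Mᵀ * B * M) *ᵥ u) = 0 := by
    calc ((1 - Mᵀ * B * M) *ᵥ u) ⬝ᵥ ((1 - Mᵀ * B * M) *ᵥ u)
        = (u ᵥ* (1 - Mᵀ * B * M)ᵀ) ⬝ᵥ ((1 - Mᵀ * B * M) *ᵥ u) := by
          rw [Matrix.vecMul_transpose]
      _ = u ⬝ᵥ (1 - Mᵀ * B * M)ᵀ *ᵥ ((1 - Mᵀ * B * M) *ᵥ u) :=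
          (Matrix.dotProduct_mulVec u (1 - Mᵀ * B * M)ᵀ _).symm
      _ = u ⬝ᵥ (1 - Mᵀ * B * M) *ᵥ u := by rw [Matrix.mulVec_mulVec, hRR]
      _ = 0 := hRu0
  exact dotProduct_self_eq_zero.mp hsq

/-- With `v = −(I − G Aᵀ (A G Aᵀ)⁺ A) G c`, if
`cᵀ G c = cᵀ G Aᵀ (A G Aᵀ)⁺ A G c` then `v = 0`. -/
theorem stmt3 {n m : ℕ}
    (G : Matrix (Fin n) (Fin n) ℝ) (hG : G.PosSemidef)
    (A : Matrix (Fin m) (Fin n) ℝ) (c : Fin n → ℝ)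
    (B : Matrix (Fin m) (Fin m) ℝ)
    (hB1 : (A * G * Aᵀ) * B * (A * G * Aᵀ) = A * G * Aᵀ)
    (hB2 : B * (A * G * Aᵀ) * B = B)
    (hB3 : ((A * G * Aᵀ) * B)ᵀ = (A * G * Aᵀ) * B)
    (hB4 : (B * (A * G * Aᵀ))ᵀ = B * (A * G * Aᵀ))
    (heq : c ⬝ᵥ G.mulVec c = c ⬝ᵥ (G * Aᵀ * B * A * G).mulVec c) :
    -(1 - G * Aᵀ * B * A).mulVec (G.mulVec c) = 0 := by
  obtain ⟨S, hSS, hSsym⟩ : ∃ S : Matrix (Fin n) (Fin n) ℝ, S * S = G ∧ Sᵀ = S := by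
    open MatrixOrder in
    refine ⟨CFC.sqrt G, CFC.sqrt_mul_sqrt_self G hG.nonneg, ?_⟩
    open MatrixOrder in
    have := (CFC.sqrt_nonneg G).posSemidef.isHermitian
    simpa [Matrix.IsHermitian, Matrix.conjTranspose_eq_transpose_of_trivial] using this
  have hvecS : c ᵥ* S = S *ᵥ c := by
    conv_lhs => rw [← hSsym]
    rw [Matrix.vecMul_transpose]
  have hMMT : (A * S) * (A * S)ᵀ = A * G * Aᵀ := by
    rw [Matrix.transpose_mul, hSsym, ← hSS]; simp only [Matrix.mul_assoc]
  have hval : ∀ N : Matrix (Fin n) (Fin n) ℝ,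
      c ⬝ᵥ (S * N * S) *ᵥ c = (S *ᵥ c) ⬝ᵥ N *ᵥ (S *ᵥ c) := by
    intro N
    rw [← Matrix.mulVec_mulVec, ← Matrix.mulVec_mulVec, Matrix.dotProduct_mulVec c S, hvecS]
  have hG2 : G * Aᵀ * B * A * G = S * ((A * S)ᵀ * B * (A * S)) * S := by
    rw [Matrix.transpose_mul, hSsym, ← hSS]; simp only [Matrix.mul_assoc]
  have hGc : c ⬝ᵥ G *ᵥ c = (S *ᵥ c) ⬝ᵥ (S *ᵥ c) := by
    have := hval 1
    rw [Matrix.mul_one, hSS, Matrix.one_mulVec] at this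
    exact this
  have heq' : (S *ᵥ c) ⬝ᵥ (S *ᵥ c)
      = (S *ᵥ c) ⬝ᵥ ((A * S)ᵀ * B * (A * S)) *ᵥ (S *ᵥ c) := by
    rw [← hGc, ← hval, ← hG2]; exact heq
  have hzero : (1 - (A * S)ᵀ * B * (A * S)) *ᵥ (S *ᵥ c) = 0 :=
    aux_main (A * S) B (by rw [hMMT]; exact hB1) (S *ᵥ c) heq'
  have hfinal : (1 - G * Aᵀ * B * A) * G = S * (1 - (A * S)ᵀ * B * (A * S)) * S := by
    have l1 : (1 - G * Aᵀ * B * A) * G = G - G * Aᵀ * B * A * G := by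
      rw [Matrix.sub_mul, Matrix.one_mul]
    have l2 : S * (1 - (A * S)ᵀ * B * (A * S)) * S
        = S * S - S * ((A * S)ᵀ * B * (A * S)) * S := by
      rw [Matrix.mul_sub, Matrix.mul_one, Matrix.sub_mul]
    rw [l1, l2, hSS, hG2]
  have : (1 - G * Aᵀ * B * A) *ᵥ (G *ᵥ c)
      = S *ᵥ ((1 - (A * S)ᵀ * B * (A * S)) *ᵥ (S *ᵥ c)) := by
    simp only [Matrix.mulVec_mulVec]
    rw [hfinal, Matrix.mul_assoc]
  rw [this, hzero, Matrix.mulVec_zero, neg_zero]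
end

section
/- Let X : [0, ∞) → Matₙ(ℝ) be a continuously differentiable curve with X(0) symmetric positive definite, and suppose X(t) is symmetric for all t. If there is a constant μ ∈ ℝ such that whenever X is positive definite on [0, s] the derivative d/dt (log det X(t)) ≥ μ holds on [0, s], then X(T) is positive definite for every finite T ≥ 0. -/
open Matrix

section Aux

variable {n : ℕ}

lemma aux_posDef_of_psd {A : Matrix (Fin n) (Fin n) ℝ} (h : A.PosSemidef)
    (hd : A.det ≠ 0) : A.PosDef := by
  refine .of_dotProduct_mulVec_pos h.1 fun x hx => ?_
  rcases (h.dotProduct_mulVec_nonneg x).lt_or_eq with hlt | heq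
  · exact hlt
  · exfalso
    have hz : A *ᵥ x = 0 := (h.dotProduct_mulVec_zero_iff x).mp heq.symm
    have hinj : Function.Injective A.mulVec :=
      Matrix.mulVec_injective_iff_isUnit.mpr
        ((Matrix.isUnit_iff_isUnit_det A).mpr (isUnit_iff_ne_zero.mpr hd))
    exact hx (hinj (by simp [hz]))

lemma aux_q_sq {A : Matrix (Fin n) (Fin n) ℝ} (a : ℝ) (x : Fin n → ℝ) :
    (a • x) ⬝ᵥ A *ᵥ (a • x) = a ^ 2 * (x ⬝ᵥ A *ᵥ x) := by
  rw [Matrix.mulVec_smul, smul_dotProduct, dotProduct_smul,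
    smul_eq_mul, smul_eq_mul]
  ring

lemma aux_cont_q {A : Matrix (Fin n) (Fin n) ℝ} :
    Continuous fun x : Fin n → ℝ => x ⬝ᵥ A *ᵥ x := by
  simp only [dotProduct, mulVec]
  exact continuous_finset_sum _ fun i _ =>
    (continuous_apply i).mul (continuous_finset_sum _ fun j _ =>
      (continuous_const.mul (continuous_apply j)))

lemma aux_lower (hn : 0 < n) {A : Matrix (Fin n) (Fin n) ℝ} (hA : A.PosDef) :
    ∃ c > 0, ∀ x : Fin n → ℝ, c * ‖x‖ ^ 2 ≤ x ⬝ᵥ A *ᵥ x := by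
  haveI : Nonempty (Fin n) := Fin.pos_iff_nonempty.mp hn
  have hne : (Metric.sphere (0 : Fin n → ℝ) 1).Nonempty :=
    NormedSpace.sphere_nonempty.mpr zero_le_one
  obtain ⟨x₀, hx₀, hmin⟩ :=
    (isCompact_sphere (0 : Fin n → ℝ) 1).exists_isMinOn hne aux_cont_q.continuousOn
  have hx₀norm : ‖x₀‖ = 1 := by simpa using hx₀
  have hx₀ne : x₀ ≠ 0 := by
    intro h; rw [h] at hx₀norm; simp at hx₀norm
  refine ⟨x₀ ⬝ᵥ A *ᵥ x₀, by simpa using hA.dotProduct_mulVec_pos hx₀ne, fun x => ?_⟩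
  rcases eq_or_ne x 0 with rfl | hx
  · simp
  · have hxn : (0 : ℝ) < ‖x‖ := norm_pos_iff.mpr hx
    have hunorm : ‖(‖x‖⁻¹ • x)‖ = 1 := by
      rw [norm_smul]
      simp [abs_of_pos (inv_pos.mpr hxn), inv_mul_cancel₀ hxn.ne']
    have hmem : (‖x‖⁻¹ • x) ∈ Metric.sphere (0 : Fin n → ℝ) 1 := by simpa using hunorm
    have h1 : x₀ ⬝ᵥ A *ᵥ x₀ ≤ (‖x‖⁻¹ • x) ⬝ᵥ A *ᵥ (‖x‖⁻¹ • x) := hmin hmem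
    rw [aux_q_sq] at h1
    have key : ‖x‖⁻¹ ^ 2 * ‖x‖ ^ 2 = 1 := by
      field_simp
    have h2 := mul_le_mul_of_nonneg_right h1 (sq_nonneg ‖x‖)
    have h3 : ‖x‖⁻¹ ^ 2 * (x ⬝ᵥ A *ᵥ x) * ‖x‖ ^ 2 = x ⬝ᵥ A *ᵥ x := by
      calc ‖x‖⁻¹ ^ 2 * (x ⬝ᵥ A *ᵥ x) * ‖x‖ ^ 2
          = ‖x‖⁻¹ ^ 2 * ‖x‖ ^ 2 * (x ⬝ᵥ A *ᵥ x) := by ring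
        _ = x ⬝ᵥ A *ᵥ x := by rw [key, one_mul]
    rw [h3] at h2
    linarith

lemma aux_bound {A : Matrix (Fin n) (Fin n) ℝ} (x : Fin n → ℝ) :
    |x ⬝ᵥ A *ᵥ x| ≤ (∑ i, ∑ j, |A i j|) * ‖x‖ ^ 2 := by
  have hxb : ∀ i, |x i| ≤ ‖x‖ := fun i => by
    simpa [Real.norm_eq_abs] using norm_le_pi_norm x i
  have hxnn : (0 : ℝ) ≤ ‖x‖ := norm_nonneg x
  simp only [dotProduct, mulVec]
  calc |∑ i, x i * ∑ j, A i j * x j|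
      ≤ ∑ i, |x i * ∑ j, A i j * x j| := Finset.abs_sum_le_sum_abs _ _
    _ = ∑ i, |x i| * |∑ j, A i j * x j| := by simp [abs_mul]
    _ ≤ ∑ i, ‖x‖ * ∑ j, |A i j| * ‖x‖ := by
        apply Finset.sum_le_sum
        intro i _
        apply mul_le_mul (hxb i) ?_ (abs_nonneg _)
          hxnn
        calc |∑ j, A i j * x j| ≤ ∑ j, |A i j * x j| := Finset.abs_sum_le_sum_abs _ _
          _ ≤ ∑ j, |A i j| * ‖x‖ := by
              apply Finset.sum_le_sum
              intro j _
              rw [abs_mul]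
              exact mul_le_mul_of_nonneg_left (hxb j) (abs_nonneg _)
    _ = (∑ i, ∑ j, |A i j|) * ‖x‖ ^ 2 := by
        rw [Finset.sum_mul]
        apply Finset.sum_congr rfl
        intro i _
        rw [Finset.mul_sum, Finset.sum_mul]
        apply Finset.sum_congr rfl
        intro j _
        ring

end Aux

/-- Let `X` be a continuously differentiable symmetric matrix
curve with `X 0` positive definite. If there is a constant `μ` such that on
every interval `[0, s]` on which `X` remains positive definite the derivative
of `t ↦ log det X(t)` is bounded below by `μ`, then `X T` is positive
definite for every finite `T ≥ 0`. -/
theorem stmt10 {n : ℕ} (X : ℝ → Matrix (Fin n) (Fin n) ℝ)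
    (hC1 : ∀ i j, ContDiff ℝ 1 (fun t => X t i j))
    (hsymm : ∀ t, (X t).IsHermitian)
    (hX0 : (X 0).PosDef)
    (μ : ℝ)
    (hμ : ∀ s, 0 ≤ s → (∀ t ∈ Set.Icc (0 : ℝ) s, (X t).PosDef) →
      ∀ t ∈ Set.Icc (0 : ℝ) s, μ ≤ deriv (fun u => Real.log (X u).det) t) :
    ∀ T, 0 ≤ T → (X T).PosDef := by
  intro T hT
  rcases Nat.eq_zero_or_pos n with hn | hn
  · subst hn
    exact ⟨hsymm T, fun x hx => absurd (Subsingleton.elim x 0) hx⟩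
  -- basic differentiability facts
  have hXd : ∀ i j, Differentiable ℝ fun t => X t i j :=
    fun i j => (hC1 i j).differentiable one_ne_zero
  have hdet : Differentiable ℝ fun t => (X t).det := by
    simp only [Matrix.det_apply']
    exact Differentiable.fun_sum fun σ _ =>
      (Differentiable.fun_finsetProd fun i _ => hXd (σ i) i).const_mul _
  set f : ℝ → ℝ := fun u => Real.log (X u).det with hf
  -- growth lemma
  have growth : ∀ t, 0 ≤ t → (∀ u ∈ Set.Icc (0 : ℝ) t, (X u).PosDef) →
      Real.exp (f 0 + μ * t) ≤ (X t).det := by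
    intro t ht hpos
    have hdpos : ∀ u ∈ Set.Icc (0 : ℝ) t, 0 < (X u).det := fun u hu => (hpos u hu).det_pos
    set g : ℝ → ℝ := fun u => f u - μ * u with hg
    have hfd : ∀ u ∈ Set.Icc (0 : ℝ) t, DifferentiableAt ℝ f u := by
      intro u hu
      exact (Real.differentiableAt_log (hdpos u hu).ne').comp u (hdet u)
    have hlin : ∀ u : ℝ, HasDerivAt (fun v : ℝ => μ * v) μ u := by
      intro u
      simpa using (hasDerivAt_id u).const_mul μ
    have hmono : MonotoneOn g (Set.Icc 0 t) := by
      apply monotoneOn_of_deriv_nonneg (convex_Icc 0 t)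
      · exact ContinuousOn.sub
          (fun u hu => ((hfd u hu).continuousAt).continuousWithinAt)
          (Continuous.continuousOn (continuous_const.mul continuous_id))
      · intro u hu
        rw [interior_Icc] at hu
        exact ((hfd u (Set.Ioo_subset_Icc_self hu)).sub
          (hlin u).differentiableAt).differentiableWithinAt
      · intro u hu
        rw [interior_Icc] at hu
        have hu' : u ∈ Set.Icc (0 : ℝ) t := Set.Ioo_subset_Icc_self hu
        have hderiv : deriv g u = deriv f u - μ := by
          rw [hg]
          rw [deriv_fun_sub (hfd u hu') (hlin u).differentiableAt, (hlin u).deriv]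
        rw [hderiv, sub_nonneg]
        exact hμ t ht hpos u hu'
    have h0t : g 0 ≤ g t :=
      hmono (Set.left_mem_Icc.mpr ht) (Set.right_mem_Icc.mpr ht) ht
    have : f 0 + μ * t ≤ f t := by
      simp only [hg] at h0t
      nlinarith [h0t]
    calc Real.exp (f 0 + μ * t) ≤ Real.exp (f t) := Real.exp_le_exp.mpr this
      _ = (X t).det := Real.exp_log (hdpos t (Set.right_mem_Icc.mpr ht))
  -- the set of good times
  set A : Set ℝ := {t | t ∈ Set.Icc (0 : ℝ) T ∧ ∀ u ∈ Set.Icc (0 : ℝ) t, (X u).PosDef}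
    with hA
  have h0A : (0 : ℝ) ∈ A := by
    refine ⟨⟨le_rfl, hT⟩, fun u hu => ?_⟩
    have : u = 0 := le_antisymm hu.2 hu.1
    rwa [this]
  have hAne : A.Nonempty := ⟨0, h0A⟩
  have hAbdd : BddAbove A := ⟨T, fun t ht => ht.1.2⟩
  set s : ℝ := sSup A with hs
  have hs0 : 0 ≤ s := le_csSup hAbdd h0A
  have hsT : s ≤ T := csSup_le hAne fun t ht => ht.1.2
  have hbelow : ∀ u, 0 ≤ u → u < s → (X u).PosDef := by
    intro u hu0 hus
    obtain ⟨t, htA, hut⟩ := exists_lt_of_lt_csSup hAne hus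
    exact htA.2 u ⟨hu0, hut.le⟩
  -- X s is positive definite
  have hXs : (X s).PosDef := by
    rcases eq_or_lt_of_le hs0 with hs0' | hs0'
    · rw [← hs0']; exact hX0
    · have hIoo : Set.Ioo (0 : ℝ) s ∈ nhdsWithin s (Set.Iio s) :=
        Ioo_mem_nhdsLT hs0'
      have hposIoo : ∀ t ∈ Set.Ioo (0 : ℝ) s, ∀ u ∈ Set.Icc (0 : ℝ) t, (X u).PosDef := by
        intro t ht u hu
        exact hbelow u hu.1 (lt_of_le_of_lt hu.2 ht.2)
      -- det X s > 0
      have hdet_s : 0 < (X s).det := by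
        have h1 : Filter.Tendsto (fun t => Real.exp (f 0 + μ * t))
            (nhdsWithin s (Set.Iio s)) (nhds (Real.exp (f 0 + μ * s))) :=
          ((Real.continuous_exp.comp (continuous_const.add (continuous_const.mul continuous_id))).tendsto s).mono_left
            nhdsWithin_le_nhds
        have h2 : Filter.Tendsto (fun t => (X t).det)
            (nhdsWithin s (Set.Iio s)) (nhds ((X s).det)) :=
          (hdet.continuous.tendsto s).mono_left nhdsWithin_le_nhds
        haveI : (nhdsWithin s (Set.Iio s)).NeBot := nhdsLT_neBot s
        have h3 : Real.exp (f 0 + μ * s) ≤ (X s).det := by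
          apply le_of_tendsto_of_tendsto h1 h2
          filter_upwards [hIoo] with t ht
          exact growth t ht.1.le (hposIoo t ht)
        exact lt_of_lt_of_le (Real.exp_pos _) h3
      -- X s is PSD
      have hpsd : (X s).PosSemidef := by
        refine .of_dotProduct_mulVec_nonneg (hsymm s) fun x => ?_
        have hqc : Continuous fun t => star x ⬝ᵥ (X t) *ᵥ x := by
          simp only [dotProduct, mulVec]
          exact continuous_finset_sum _ fun i _ =>
            (continuous_const.mul (continuous_finset_sum _ fun j _ =>
              ((hXd i j).continuous.mul continuous_const)))
        haveI : (nhdsWithin s (Set.Iio s)).NeBot := nhdsLT_neBot s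
        apply ge_of_tendsto ((hqc.tendsto s).mono_left (nhdsWithin_le_nhds (s := Set.Iio s)))
        filter_upwards [hIoo] with t ht
        exact ((hposIoo t ht t ⟨ht.1.le, le_rfl⟩).posSemidef).dotProduct_mulVec_nonneg x
      exact aux_posDef_of_psd hpsd hdet_s.ne'
  -- s must equal T
  have hsA : s ∈ A := by
    refine ⟨⟨hs0, hsT⟩, fun u hu => ?_⟩
    rcases lt_or_eq_of_le hu.2 with h | h
    · exact hbelow u hu.1 h
    · rwa [h]
  rcases eq_or_lt_of_le hsT with hST | hST
  · rw [← hST]; exact hsA.2 s ⟨hs0, le_rfl⟩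
  · exfalso
    -- openness: positive definiteness persists slightly beyond s
    obtain ⟨c, hc, hlow⟩ := aux_lower hn hXs
    set E : ℝ → ℝ := fun t => ∑ i, ∑ j, |X t i j - X s i j| with hE
    have hEc : Continuous E := by
      apply continuous_finset_sum
      intro i _
      apply continuous_finset_sum
      intro j _
      exact ((hXd i j).continuous.sub continuous_const).abs
    have hEs : E s = 0 := by simp [hE]
    have hEev : ∀ᶠ t in nhds s, E t < c := by
      have := hEc.continuousAt (x := s)
      rw [ContinuousAt, hEs] at this
      exact this (Iio_mem_nhds hc)
    obtain ⟨δ, hδ, hδball⟩ := Metric.eventually_nhds_iff.mp hEev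
    have hopen : ∀ t, dist t s < δ → (X t).PosDef := by
      intro t htd
      refine .of_dotProduct_mulVec_pos (hsymm t) fun x hx => ?_
      have hxn : (0 : ℝ) < ‖x‖ := norm_pos_iff.mpr hx
      have hb := aux_bound (A := X t - X s) x
      have hsplit : x ⬝ᵥ (X t) *ᵥ x
          = x ⬝ᵥ (X s) *ᵥ x + x ⬝ᵥ (X t - X s) *ᵥ x := by
        rw [Matrix.sub_mulVec, dotProduct_sub]
        ring
      have hEt : E t < c := hδball htd
      have hEtx : ∀ i j, (X t - X s) i j = X t i j - X s i j := fun i j => rfl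
      have : x ⬝ᵥ (X t - X s) *ᵥ x ≥ -(E t * ‖x‖ ^ 2) := by
        have h1 : |x ⬝ᵥ (X t - X s) *ᵥ x| ≤ E t * ‖x‖ ^ 2 := by
          simpa [hE, hEtx] using hb
        linarith [abs_le.mp h1]
      have hlx := hlow x
      have hstar : star x = x := by simp
      rw [hstar, hsplit]
      nlinarith [mul_pos (sub_pos.mpr hEt) (pow_pos hxn 2)]
    have : min (s + δ / 2) T ∈ A := by
      refine ⟨⟨le_min (by linarith) hT, min_le_right _ _⟩, fun u hu => ?_⟩
      rcases le_or_gt u s with h | h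
      · rcases lt_or_eq_of_le h with h' | h'
        · exact hbelow u hu.1 h'
        · rwa [h']
      · apply hopen
        have hu2 : u ≤ s + δ / 2 := le_trans hu.2 (min_le_left _ _)
        rw [Real.dist_eq, abs_of_pos (by linarith)]
        linarith
    have : min (s + δ / 2) T ≤ s := le_csSup hAbdd this
    have h1 : s < min (s + δ / 2) T := lt_min (by linarith) hST
    linarith
end

section
/- Let X be a differentiable matrix curve with X(t) symmetric positive definite and Ẋ(t) in the kernel of the constraint map (tr(Aℓ Ẋ) = 0 for all ℓ), where the dynamics are the first ansatz: vec(Ẋ) = −(I − G 𝒜ᵀ(𝒜G𝒜ᵀ)⁻¹𝒜) G vec(C) with G = ½(C⁻¹⊗X + X⊗C⁻¹). If C⁻¹ and X(0) satisfy the linear constraints 𝒜 vec(C⁻¹) = b and 𝒜 vec(X(0)) = b, then d/dt log det X(t) = −n + bᵀ(𝒜G𝒜ᵀ)⁻¹b ≥ −n. -/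
open Matrix Kronecker

/-- Column-stacking vectorization of a square matrix: `vec M (j, i) = M i j`. -/
def vec {n : ℕ} (M : Matrix (Fin n) (Fin n) ℝ) : Fin n × Fin n → ℝ :=
  fun p => M p.2 p.1

/-- The `m × n²` constraint matrix whose rows are `vec(Aℓ)ᵀ`. -/
def constrMat {n m : ℕ} (A : Fin m → Matrix (Fin n) (Fin n) ℝ) :
    Matrix (Fin m) (Fin n × Fin n) ℝ :=
  Matrix.of fun ℓ p => _root_.vec (A ℓ) p

/-- The conductance of the first ansatz: `G = ½ (C⁻¹ ⊗ X + X ⊗ C⁻¹)`. -/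
noncomputable def conduct {n : ℕ} (C X : Matrix (Fin n) (Fin n) ℝ) :
    Matrix (Fin n × Fin n) (Fin n × Fin n) ℝ :=
  (1 / 2 : ℝ) • (C⁻¹ ⊗ₖ X + X ⊗ₖ C⁻¹)

lemma hasDerivAt_det' {n : ℕ} (X X' : ℝ → Matrix (Fin n) (Fin n) ℝ) (t : ℝ)
    (hX' : ∀ i j, HasDerivAt (fun s => X s i j) (X' t i j) t) :
    HasDerivAt (fun s => (X s).det)
      (∑ i, (Matrix.updateRow (X t) i (X' t i)).det) t := by
  have h1 : ∀ s, (X s).det = ∑ σ : Equiv.Perm (Fin n),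
      ((Equiv.Perm.sign σ : ℤ) : ℝ) * ∏ i, X s (σ i) i := fun s => Matrix.det_apply' _
  simp only [h1]
  have h2 : HasDerivAt (fun s => ∑ σ : Equiv.Perm (Fin n),
      ((Equiv.Perm.sign σ : ℤ) : ℝ) * ∏ i, X s (σ i) i)
      (∑ σ : Equiv.Perm (Fin n), ∑ i, ((Equiv.Perm.sign σ : ℤ) : ℝ) *
        ((∏ j ∈ Finset.univ.erase i, X t (σ j) j) • X' t (σ i) i)) t := by
    apply HasDerivAt.fun_sum
    intro σ _
    simpa only [Finset.mul_sum] using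
      ((HasDerivAt.fun_finsetProd (fun i _ => hX' (σ i) i)).const_mul
        (((Equiv.Perm.sign σ : ℤ) : ℝ)))
  convert h2 using 1
  simp only [Matrix.det_apply']
  rw [Finset.sum_comm]
  apply Finset.sum_congr rfl
  intro σ _
  rw [← Equiv.sum_comp σ.symm (fun i => ((Equiv.Perm.sign σ : ℤ) : ℝ) *
    ((∏ j ∈ Finset.univ.erase i, X t (σ j) j) • X' t (σ i) i))]
  apply Finset.sum_congr rfl
  intro i _
  simp only [Equiv.apply_symm_apply]
  congr 1
  rw [← Finset.mul_prod_erase Finset.univ _ (Finset.mem_univ (σ.symm i))]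
  rw [smul_eq_mul]
  have e1 : (X t).updateRow i (X' t i) (σ (σ.symm i)) (σ.symm i) = X' t i (σ.symm i) := by
    rw [Equiv.apply_symm_apply, Matrix.updateRow_self]
  have e2 : ∀ j ∈ Finset.univ.erase (σ.symm i),
      (X t).updateRow i (X' t i) (σ j) j = X t (σ j) j := by
    intro j hj
    have : σ j ≠ i := by
      intro h
      exact (Finset.mem_erase.mp hj).1 (by simpa using congrArg σ.symm h)
    rw [Matrix.updateRow_ne this]
  rw [e1, Finset.prod_congr rfl e2, mul_comm]

lemma sum_det_updateRow {n : ℕ} (M H : Matrix (Fin n) (Fin n) ℝ) (hM : IsUnit M.det) :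
    ∑ i, (Matrix.updateRow M i (H i)).det = Matrix.trace (M⁻¹ * H) * M.det := by
  have key : ∀ i : Fin n, H i = ∑ k, (H * M⁻¹) i k • M k := by
    intro i
    have : H * M⁻¹ * M = H := by
      rw [Matrix.mul_assoc, Matrix.nonsing_inv_mul M hM, Matrix.mul_one]
    conv_lhs => rw [← this]
    ext j
    simp [Matrix.mul_apply, Finset.sum_apply]
  calc ∑ i, (Matrix.updateRow M i (H i)).det
      = ∑ i, (H * M⁻¹) i i • M.det := by
        exact Finset.sum_congr rfl fun i _ => by rw [key i, Matrix.det_updateRow_sum]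
    _ = Matrix.trace (M⁻¹ * H) * M.det := by
        rw [Matrix.trace_mul_comm]
        simp [Matrix.trace, Matrix.diag, Finset.sum_mul]

lemma vec_dot {n : ℕ} (P Q : Matrix (Fin n) (Fin n) ℝ) :
    _root_.vec P ⬝ᵥ _root_.vec Q = Matrix.trace (Pᵀ * Q) := by
  simp [Matrix.trace, Matrix.diag, Matrix.mul_apply, _root_.vec, dotProduct, Fintype.sum_prod_type]

lemma kron_mulVec {n : ℕ} (P Q M : Matrix (Fin n) (Fin n) ℝ) :
    (P ⊗ₖ Q).mulVec (_root_.vec M) = _root_.vec (Q * M * Pᵀ) := by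
  funext p
  obtain ⟨j, i⟩ := p
  simp only [Matrix.mulVec, dotProduct, _root_.vec, Matrix.kroneckerMap_apply,
    Fintype.sum_prod_type, Matrix.mul_apply, Matrix.transpose_apply]
  refine Finset.sum_congr rfl fun l _ => ?_
  rw [Finset.sum_mul]
  exact Finset.sum_congr rfl fun k _ => by ring

lemma vec_add {n : ℕ} (P Q : Matrix (Fin n) (Fin n) ℝ) : _root_.vec (P + Q) = _root_.vec P + _root_.vec Q := rfl
lemma vec_smul {n : ℕ} (a : ℝ) (P : Matrix (Fin n) (Fin n) ℝ) : _root_.vec (a • P) = a • _root_.vec P := rfl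

lemma conduct_mulVec {n : ℕ} (C Xm M : Matrix (Fin n) (Fin n) ℝ)
    (hCi : (C⁻¹)ᵀ = C⁻¹) (hXs : Xmᵀ = Xm) :
    (conduct C Xm).mulVec (_root_.vec M) = (1/2 : ℝ) • (_root_.vec (Xm * M * C⁻¹) + _root_.vec (C⁻¹ * M * Xm)) := by
  rw [conduct, Matrix.smul_mulVec, Matrix.add_mulVec, kron_mulVec, kron_mulVec, hCi, hXs]

/-- Along the first-ansatz Physarum dynamics
`vec(Ẋ) = −(I − G𝒜ᵀ(𝒜G𝒜ᵀ)⁻¹𝒜) G vec(C)` with `G = ½(C⁻¹⊗X + X⊗C⁻¹)`,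
if `C⁻¹` and `X 0` satisfy the linear constraints, then
`d/dt log det X(t) = −n + bᵀ(𝒜G𝒜ᵀ)⁻¹b ≥ −n`. -/
theorem stmt11 {n m : ℕ} (C : Matrix (Fin n) (Fin n) ℝ) (hC : C.PosDef)
    (A : Fin m → Matrix (Fin n) (Fin n) ℝ) (hA : ∀ ℓ, (A ℓ)ᵀ = A ℓ)
    (b : Fin m → ℝ)
    (X X' : ℝ → Matrix (Fin n) (Fin n) ℝ)
    (hX : ∀ t, (X t).PosDef)
    (hX' : ∀ t i j, HasDerivAt (fun s => X s i j) (X' t i j) t)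
    (hdyn : ∀ t, _root_.vec (X' t) =
      -((1 - conduct C (X t) * (constrMat A)ᵀ *
          (constrMat A * conduct C (X t) * (constrMat A)ᵀ)⁻¹ *
          constrMat A).mulVec ((conduct C (X t)).mulVec (_root_.vec C))))
    (hkernel : ∀ t ℓ, Matrix.trace (A ℓ * X' t) = 0)
    (hinv : ∀ t, (constrMat A * conduct C (X t) * (constrMat A)ᵀ).PosDef)
    (hCfeas : (constrMat A).mulVec (_root_.vec C⁻¹) = b)
    (hX0feas : (constrMat A).mulVec (_root_.vec (X 0)) = b) :
    ∀ t, HasDerivAt (fun s => Real.log (X s).det)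
        (-(n : ℝ) + b ⬝ᵥ (constrMat A * conduct C (X t) * (constrMat A)ᵀ)⁻¹.mulVec b) t ∧
      -(n : ℝ) ≤ -(n : ℝ) +
        b ⬝ᵥ (constrMat A * conduct C (X t) * (constrMat A)ᵀ)⁻¹.mulVec b := by
  intro t
  set 𝒜 := constrMat A with h𝒜
  set G := conduct C (X t) with hGdef
  set Mt := 𝒜 * G * 𝒜ᵀ with hMt
  -- symmetry facts
  have hCT : Cᵀ = C := by
    have := hC.1.eq; rwa [Matrix.conjTranspose_eq_transpose_of_trivial] at this
  have hCiT : (C⁻¹)ᵀ = C⁻¹ := by rw [Matrix.transpose_nonsing_inv, hCT]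
  have hXT : ∀ s, (X s)ᵀ = X s := fun s => by
    have := (hX s).1.eq; rwa [Matrix.conjTranspose_eq_transpose_of_trivial] at this
  have hXiT : ((X t)⁻¹)ᵀ = (X t)⁻¹ := by rw [Matrix.transpose_nonsing_inv, hXT]
  have hCdet : IsUnit C.det := isUnit_iff_ne_zero.mpr hC.det_pos.ne'
  have hXdet : ∀ s, IsUnit (X s).det := fun s => isUnit_iff_ne_zero.mpr (hX s).det_pos.ne'
  have hGT : Gᵀ = G := by
    rw [hGdef, conduct, Matrix.transpose_smul, Matrix.transpose_add,
      ← Matrix.kroneckerMap_transpose, ← Matrix.kroneckerMap_transpose, hCiT, hXT]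
  have hMtT : Mtᵀ = Mt := by
    have := (hinv t).1.eq; rwa [Matrix.conjTranspose_eq_transpose_of_trivial] at this
  have hMtiT : (Mt⁻¹)ᵀ = Mt⁻¹ := by rw [Matrix.transpose_nonsing_inv, hMtT]
  -- G vec C = vec (X t), G vec (X t)⁻¹ = vec C⁻¹
  have hGvecC : G.mulVec (_root_.vec C) = _root_.vec (X t) := by
    rw [hGdef, conduct_mulVec C (X t) C hCiT (hXT t)]
    rw [Matrix.mul_assoc (X t) C C⁻¹, Matrix.mul_nonsing_inv C hCdet, Matrix.mul_one,
      Matrix.nonsing_inv_mul C hCdet, Matrix.one_mul]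
    have e : (1/2 : ℝ) • (X t + X t) = X t := by
      rw [← two_smul ℝ, smul_smul]; norm_num
    rw [← vec_add, ← vec_smul, e]
  have hGvecXi : G.mulVec (_root_.vec (X t)⁻¹) = _root_.vec C⁻¹ := by
    rw [hGdef, conduct_mulVec C (X t) (X t)⁻¹ hCiT (hXT t)]
    rw [Matrix.mul_nonsing_inv (X t) (hXdet t), Matrix.one_mul,
      Matrix.mul_assoc C⁻¹ (X t)⁻¹ (X t), Matrix.nonsing_inv_mul (X t) (hXdet t),
      Matrix.mul_one]
    have e : (1/2 : ℝ) • (C⁻¹ + C⁻¹) = C⁻¹ := by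
      rw [← two_smul ℝ, smul_smul]; norm_num
    rw [← vec_add, ← vec_smul, e]
  -- feasibility is conserved
  have hfeas : ∀ s, 𝒜.mulVec (_root_.vec (X s)) = b := by
    have hder : ∀ ℓ s, HasDerivAt (fun u => (𝒜.mulVec (_root_.vec (X u))) ℓ) 0 s := by
      intro ℓ s
      have h0 : HasDerivAt (fun u => ∑ p : Fin n × Fin n, 𝒜 ℓ p * X u p.2 p.1)
          (∑ p : Fin n × Fin n, 𝒜 ℓ p * X' s p.2 p.1) s :=
        HasDerivAt.fun_sum (fun p _ => (hX' s p.2 p.1).const_mul _)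
      have hz : ∑ p : Fin n × Fin n, 𝒜 ℓ p * X' s p.2 p.1 = 0 := by
        have : ∑ p : Fin n × Fin n, 𝒜 ℓ p * X' s p.2 p.1
            = Matrix.trace ((A ℓ)ᵀ * X' s) := by
          simp only [Matrix.trace, Matrix.diag, Matrix.mul_apply, Matrix.transpose_apply,
            h𝒜, constrMat, Matrix.of_apply, _root_.vec, Fintype.sum_prod_type]
        rw [this, hA ℓ, hkernel s ℓ]
      rw [hz] at h0
      exact h0
    intro s
    funext ℓ
    have hc := is_const_of_deriv_eq_zero (f := fun u => (𝒜.mulVec (_root_.vec (X u))) ℓ)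
      (fun u => (hder ℓ u).differentiableAt)
      (fun u => (hder ℓ u).deriv) s 0
    rw [show (𝒜.mulVec (_root_.vec (X s))) ℓ = (𝒜.mulVec (_root_.vec (X 0))) ℓ from hc, hX0feas]
  -- the value of vec X'
  have hvecX' : _root_.vec (X' t) = (G * 𝒜ᵀ * Mt⁻¹ * 𝒜).mulVec (_root_.vec (X t)) - _root_.vec (X t) := by
    rw [hdyn t, hGvecC, Matrix.sub_mulVec, Matrix.one_mulVec, neg_sub]
  -- the trace computation
  have htrace : Matrix.trace ((X t)⁻¹ * X' t) = -(n : ℝ) + b ⬝ᵥ Mt⁻¹.mulVec b := by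
    have h1 : Matrix.trace ((X t)⁻¹ * X' t) = _root_.vec ((X t)⁻¹) ⬝ᵥ _root_.vec (X' t) := by
      rw [vec_dot, hXiT]
    rw [h1, hvecX', dotProduct_sub]
    have h2 : _root_.vec ((X t)⁻¹) ⬝ᵥ _root_.vec (X t) = (n : ℝ) := by
      rw [vec_dot, hXiT, Matrix.nonsing_inv_mul (X t) (hXdet t), Matrix.trace_one]
      simp
    have h3 : _root_.vec ((X t)⁻¹) ⬝ᵥ (G * 𝒜ᵀ * Mt⁻¹ * 𝒜).mulVec (_root_.vec (X t))
        = b ⬝ᵥ Mt⁻¹.mulVec b := by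
      rw [dotProduct_mulVec, ← Matrix.vecMul_vecMul, ← Matrix.vecMul_vecMul,
        ← Matrix.vecMul_vecMul]
      rw [← Matrix.mulVec_transpose G, hGT, hGvecXi]
      rw [← Matrix.mulVec_transpose 𝒜ᵀ, Matrix.transpose_transpose, hCfeas]
      rw [← Matrix.mulVec_transpose Mt⁻¹, hMtiT]
      rw [← dotProduct_mulVec, hfeas t, dotProduct_comm]
    rw [h2, h3]
    ring
  constructor
  · have hdet : HasDerivAt (fun s => (X s).det)
        (Matrix.trace ((X t)⁻¹ * X' t) * (X t).det) t := by
      have := hasDerivAt_det' X X' t (hX' t)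
      rwa [sum_det_updateRow _ _ (hXdet t)] at this
    have hlog := hdet.log (hX t).det_pos.ne'
    rw [mul_div_assoc, div_self (hX t).det_pos.ne', mul_one, htrace] at hlog
    exact hlog
  · have hnn : 0 ≤ b ⬝ᵥ Mt⁻¹.mulVec b := by
      have := ((hinv t).inv).posSemidef.dotProduct_mulVec_nonneg b
      simpa using this
    linarith
end

section
/- Let G be symmetric positive semidefinite, 𝒜 a matrix, C a cost vector. The vector F* = −(I − G𝒜ᵀ(𝒜G𝒜ᵀ)⁺𝒜)G vec(C) is the unique minimizer of the quadratic program min { vec(C)ᵀ f + ½ fᵀ G⁺ f : 𝒜 f = 0, f ∈ range(G) }. -/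
open Matrix
open scoped MatrixOrder

/-- Uniqueness of the Moore–Penrose pseudoinverse. -/
lemma mp_unique {m n : Type*} [Fintype m] [Fintype n]
    (A : Matrix m n ℝ) (B C : Matrix n m ℝ)
    (hB1 : A * B * A = A) (hB2 : B * A * B = B)
    (hB3 : (A * B)ᵀ = A * B) (hB4 : (B * A)ᵀ = B * A)
    (hC1 : A * C * A = A) (hC2 : C * A * C = C)
    (hC3 : (A * C)ᵀ = A * C) (hC4 : (C * A)ᵀ = C * A) : B = C := by
  have hAB : A * B = A * C := by
    calc A * B = (A * B)ᵀ := hB3.symm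
    _ = Bᵀ * (A * C * A)ᵀ := by rw [transpose_mul, hC1]
    _ = (A * B)ᵀ * (A * C)ᵀ := by simp only [transpose_mul, Matrix.mul_assoc]
    _ = (A * B) * (A * C) := by rw [hB3, hC3]
    _ = (A * B * A) * C := by simp only [Matrix.mul_assoc]
    _ = A * C := by rw [hB1]
  have hBA : B * A = C * A := by
    calc B * A = (B * A)ᵀ := hB4.symm
    _ = (A * C * A)ᵀ * Bᵀ := by rw [transpose_mul, hC1]
    _ = (C * A)ᵀ * (B * A)ᵀ := by simp only [transpose_mul, Matrix.mul_assoc]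
    _ = (C * A) * (B * A) := by rw [hB4, hC4]
    _ = C * (A * B * A) := by simp only [Matrix.mul_assoc]
    _ = C * A := by rw [hB1]
  calc B = B * A * B := hB2.symm
  _ = C * A * B := by rw [hBA]
  _ = C * (A * B) := by rw [Matrix.mul_assoc]
  _ = C * (A * C) := by rw [hAB]
  _ = C * A * C := by rw [Matrix.mul_assoc]
  _ = C := hC2

/-- The pseudoinverse of a symmetric real matrix is symmetric. -/
lemma mp_symm {n : Type*} [Fintype n]
    (A B : Matrix n n ℝ) (hA : Aᵀ = A)
    (hB1 : A * B * A = A) (hB2 : B * A * B = B)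
    (hB3 : (A * B)ᵀ = A * B) (hB4 : (B * A)ᵀ = B * A) : Bᵀ = B := by
  refine (mp_unique A Bᵀ B ?_ ?_ ?_ ?_ hB1 hB2 hB3 hB4)
  · have h : A * Bᵀ * A = (A * B * A)ᵀ := by simp only [transpose_mul, hA, Matrix.mul_assoc]
    rw [h, hB1, hA]
  · have h : Bᵀ * A * Bᵀ = (B * A * B)ᵀ := by simp only [transpose_mul, hA, Matrix.mul_assoc]
    rw [h, hB2]
  · rw [transpose_mul, transpose_transpose, hA, ← hB4, transpose_mul, hA]
  · rw [transpose_mul, transpose_transpose, hA, ← hB3, transpose_mul, hA]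

/-- For a symmetric matrix, the quadratic form is symmetric in its arguments. -/
lemma symdot {n : Type*} [Fintype n] (M : Matrix n n ℝ) (hMt : Mᵀ = M) (x y : n → ℝ) :
    x ⬝ᵥ M.mulVec y = y ⬝ᵥ M.mulVec x := by
  rw [Matrix.dotProduct_mulVec]
  conv_lhs => rw [← hMt]
  rw [Matrix.vecMul_transpose, dotProduct_comm]

lemma transdot {k n : Type*} [Fintype k] [Fintype n]
    (A : Matrix k n ℝ) (t : k → ℝ) (d : n → ℝ) :
    (Aᵀ.mulVec t) ⬝ᵥ d = t ⬝ᵥ (A.mulVec d) := by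
  rw [Matrix.dotProduct_mulVec, Matrix.mulVec_transpose, dotProduct_comm]

/-- For symmetric PSD `G` (with pseudoinverse `Gp`), matrix `𝒜`
and cost vector `c = vec(C)`, the vector
`F* = −(I − G𝒜ᵀ(𝒜G𝒜ᵀ)⁺𝒜) G c` is the unique minimizer of
`f ↦ cᵀ f + ½ fᵀ G⁺ f` over `{f : 𝒜 f = 0, f ∈ range G}`. -/
theorem stmt12 {N : Type*} [Fintype N] [DecidableEq N] {m : ℕ}
    (G : Matrix N N ℝ) (hG : G.PosSemidef)
    (𝒜 : Matrix (Fin m) N ℝ) (c : N → ℝ)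
    (Gp : Matrix N N ℝ)
    (hGp1 : G * Gp * G = G) (hGp2 : Gp * G * Gp = Gp)
    (hGp3 : (G * Gp)ᵀ = G * Gp) (hGp4 : (Gp * G)ᵀ = Gp * G)
    (B : Matrix (Fin m) (Fin m) ℝ)
    (hB1 : (𝒜 * G * 𝒜ᵀ) * B * (𝒜 * G * 𝒜ᵀ) = 𝒜 * G * 𝒜ᵀ)
    (hB2 : B * (𝒜 * G * 𝒜ᵀ) * B = B)
    (hB3 : ((𝒜 * G * 𝒜ᵀ) * B)ᵀ = (𝒜 * G * 𝒜ᵀ) * B)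
    (hB4 : (B * (𝒜 * G * 𝒜ᵀ))ᵀ = B * (𝒜 * G * 𝒜ᵀ)) :
    let Fstar : N → ℝ := -(1 - G * 𝒜ᵀ * B * 𝒜).mulVec (G.mulVec c)
    let obj : (N → ℝ) → ℝ := fun f => c ⬝ᵥ f + (1 / 2 : ℝ) * (f ⬝ᵥ Gp.mulVec f)
    (𝒜.mulVec Fstar = 0 ∧ Fstar ∈ Set.range G.mulVec) ∧
    ∀ f, 𝒜.mulVec f = 0 → f ∈ Set.range G.mulVec → f ≠ Fstar →
      obj Fstar < obj f := by
  intro Fstar obj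
  set S : Matrix (Fin m) (Fin m) ℝ := 𝒜 * G * 𝒜ᵀ with hS
  have hGt : Gᵀ = G := hG.isHermitian.eq
  have hSt : Sᵀ = S := by
    rw [hS]; simp only [transpose_mul, transpose_transpose, hGt, Matrix.mul_assoc]
  have hBt : Bᵀ = B := mp_symm S B hSt hB1 hB2 hB3 hB4
  have hGpt : Gpᵀ = Gp := mp_symm G Gp hGt hGp1 hGp2 hGp3 hGp4
  -- square root of G
  set H : Matrix N N ℝ := CFC.sqrt G with hHdef
  have hHH : H * H = G := CFC.sqrt_mul_sqrt_self G hG.nonneg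
  have hHt : Hᵀ = H := (CFC.sqrt_nonneg G).posSemidef.isHermitian.eq
  -- Key identity: S * B * (𝒜 * G) = 𝒜 * G
  have hkey : S * B * (𝒜 * G) = 𝒜 * G := by
    set X : Matrix (Fin m) N ℝ := S * B * (𝒜 * H) - 𝒜 * H with hX
    have hQQ : (𝒜 * H) * (𝒜 * H)ᵀ = S := by
      rw [transpose_mul, hHt, hS]
      simp only [Matrix.mul_assoc, hHH]
      rw [← Matrix.mul_assoc H H 𝒜ᵀ, hHH]
    have hXXt : X * Xᵀ = 0 := by
      have e1 : X * Xᵀ = S * B * ((𝒜 * H) * (𝒜 * H)ᵀ) * Bᵀ * Sᵀ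
          - S * B * ((𝒜 * H) * (𝒜 * H)ᵀ)
          - ((𝒜 * H) * (𝒜 * H)ᵀ) * Bᵀ * Sᵀ + (𝒜 * H) * (𝒜 * H)ᵀ := by
        rw [hX]
        simp only [transpose_sub, transpose_mul, Matrix.sub_mul, Matrix.mul_sub]
        simp only [Matrix.mul_assoc]
        abel
      rw [e1, hQQ, hBt, hSt]
      have h2 : S * B * S * B * S = S := by rw [hB1, hB1]
      have h3 : S * B * S = S := hB1
      calc S * B * S * B * S - S * B * S - S * B * S + S
          = S - S - S + S := by rw [h2, h3]
        _ = 0 := by abel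
    have hX0 : X = 0 := by
      have h : Xᵀᴴ * Xᵀ = 0 := by simpa using hXXt
      simpa using Matrix.conjTranspose_mul_self_eq_zero.mp h
    have hXH : S * B * (𝒜 * H) = 𝒜 * H := by
      exact sub_eq_zero.mp (hX.symm.trans hX0)
    calc S * B * (𝒜 * G) = S * B * (𝒜 * H) * H := by
          rw [← hHH]; simp only [Matrix.mul_assoc]
      _ = 𝒜 * H * H := by rw [hXH]
      _ = 𝒜 * G := by rw [Matrix.mul_assoc, hHH]
  -- Fstar = G *ᵥ v
  set v : N → ℝ := -(c - (𝒜ᵀ * B * (𝒜 * G)).mulVec c) with hv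
  have hFv : Fstar = G.mulVec v := by
    show -(1 - G * 𝒜ᵀ * B * 𝒜).mulVec (G.mulVec c) = G.mulVec v
    rw [hv, Matrix.mulVec_neg, Matrix.mulVec_sub, Matrix.sub_mulVec, Matrix.one_mulVec]
    simp only [Matrix.mulVec_mulVec, Matrix.mul_assoc]
  -- feasibility
  have hAF : 𝒜.mulVec Fstar = 0 := by
    rw [hFv, Matrix.mulVec_mulVec, hv, Matrix.mulVec_neg, Matrix.mulVec_sub,
      Matrix.mulVec_mulVec]
    have e : 𝒜 * G * (𝒜ᵀ * B * (𝒜 * G)) = 𝒜 * G := by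
      calc 𝒜 * G * (𝒜ᵀ * B * (𝒜 * G)) = S * B * (𝒜 * G) := by
            rw [hS]; simp only [Matrix.mul_assoc]
        _ = 𝒜 * G := hkey
    rw [e]
    simp
  refine ⟨⟨hAF, ⟨v, hFv.symm⟩⟩, ?_⟩
  -- optimality
  intro f hAf hfr hne
  obtain ⟨y, hy⟩ := hfr
  set d : N → ℝ := f - Fstar with hd
  have hfd : f = Fstar + d := by rw [hd]; abel
  have hdG : d = G.mulVec (y - v) := by
    rw [hd, ← hy, hFv, Matrix.mulVec_sub]
  have hAd : 𝒜.mulVec d = 0 := by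
    rw [hd, Matrix.mulVec_sub, hAf, hAF, sub_zero]
  have hdne : d ≠ 0 := sub_ne_zero.mpr hne
  -- GpGG = G
  have hGpGG : Gp * G * G = G := by
    have h : (Gp * G * G)ᵀ = G := by
      rw [transpose_mul, hGp4, hGt, ← Matrix.mul_assoc, hGp1]
    calc Gp * G * G = (Gp * G * G)ᵀᵀ := (transpose_transpose _).symm
      _ = Gᵀ := by rw [h]
      _ = G := hGt
  -- gradient term vanishes
  have hGpGt : (Gp * G)ᵀ = Gp * G := hGp4
  have hgrad : c ⬝ᵥ d + d ⬝ᵥ Gp.mulVec Fstar = 0 := by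
    have h1 : Gp.mulVec Fstar = (Gp * G).mulVec v := by
      rw [hFv, Matrix.mulVec_mulVec]
    have h2 : d ⬝ᵥ Gp.mulVec Fstar = v ⬝ᵥ d := by
      rw [h1, symdot (Gp * G) hGpGt d v, hdG, Matrix.mulVec_mulVec, hGpGG]
    rw [h2, ← add_dotProduct]
    have h3 : c + v = 𝒜ᵀ.mulVec ((B * (𝒜 * G)).mulVec c) := by
      rw [hv, Matrix.mulVec_mulVec]
      simp only [Matrix.mul_assoc]
      abel
    rw [h3, transdot, hAd, dotProduct_zero]
  -- quadratic term
  have hquad : d ⬝ᵥ Gp.mulVec d = (y - v) ⬝ᵥ G.mulVec (y - v) := by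
    conv_lhs => rw [hdG]
    rw [Matrix.mulVec_mulVec, symdot (Gp * G) hGpGt _ _, Matrix.mulVec_mulVec, hGpGG]
  have hquadpos : 0 < d ⬝ᵥ Gp.mulVec d := by
    have hnn : 0 ≤ (y - v) ⬝ᵥ G.mulVec (y - v) := by
      have := hG.dotProduct_mulVec_nonneg (y - v)
      rwa [star_trivial] at this
    rcases eq_or_lt_of_le hnn with h | h
    · exfalso
      apply hdne
      rw [hdG]
      refine (hG.dotProduct_mulVec_zero_iff (y - v)).mp ?_
      rw [star_trivial]
      exact h.symm
    · rw [hquad]; exact h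
  -- conclude
  have hcross : Fstar ⬝ᵥ Gp.mulVec d = d ⬝ᵥ Gp.mulVec Fstar := symdot Gp hGpt Fstar d
  rw [hfd]
  show obj Fstar < obj (Fstar + d)
  simp only [obj, dotProduct_add, Matrix.mulVec_add, add_dotProduct]
  nlinarith [hgrad, hquadpos, hcross]
end
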